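/- Let L be a locally finite modular lattice with least element ⊥, let w be a projective-constant weighting on L, and let r be an integer such that (w, r) satisfies the differential condition on L. Define x ∼ y to hold if and only if every covering path from x ⊓ y to x ⊔ y contains no covering pair (u, v) with w(u, v) = 0. Then for every x ∈ L with x ∼ ⊥, the truncated differential equation holds: (∑_{y ⋖ x, y ∼ ⊥} w(y, x)) + r = ∑_{z : x ⋖ z, z ∼ ⊥} w(x, z). -/

import Mathlib

open scoped BigOperators




open scoped BigOperators

/-- A weighting `w` on a lattice is projective-constant if it takes equal values on
cover-projective coverings. -/
def ProjConst {L : Type*} [Lattice L] (w : L → L → ℤ) : Prop :=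
  ∀ x y : L, x ≠ y → x ⊓ y ⋖ x → x ⊓ y ⋖ y → x ⋖ x ⊔ y → y ⋖ x ⊔ y →
    w (x ⊓ y) x = w y (x ⊔ y) ∧ w (x ⊓ y) y = w x (x ⊔ y)

/-- The pair `(w, r)` satisfies the differential condition on `L`. -/
def DiffCond {L : Type*} [Lattice L] (w : L → L → ℤ) (r : ℤ) : Prop :=
  ∀ x : L, {y | y ⋖ x}.Finite ∧ {z | x ⋖ z}.Finite ∧
    ((∑ᶠ y ∈ {y | y ⋖ x}, w y x) + r = ∑ᶠ z ∈ {z | x ⋖ z}, w x z)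

/-- `SimW w x y` holds iff every covering path from `x ⊓ y` to `x ⊔ y` contains no covering
pair `(u, v)` with `w u v = 0`. -/
def SimW {L : Type*} [Lattice L] (w : L → L → ℤ) (x y : L) : Prop :=
  ∀ (n : ℕ) (c : ℕ → L), c 0 = x ⊓ y → c n = x ⊔ y → (∀ i < n, c i ⋖ c (i + 1)) →
    ∀ i < n, w (c i) (c (i + 1)) ≠ 0


section Aux
variable {L : Type*} [Lattice L] [OrderBot L] (w : L → L → ℤ)

/-- Every covering path from `⊥` to `x` has all weights nonzero. -/
def Sim0 (x : L) : Prop :=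
  ∀ (n : ℕ) (c : ℕ → L), c 0 = ⊥ → c n = x → (∀ i < n, c i ⋖ c (i + 1)) →
    ∀ i < n, w (c i) (c (i + 1)) ≠ 0

variable {w}

lemma sim0_extend {x y : L} (hx : Sim0 w x) (hyx : y ⋖ x)
    {n : ℕ} {c : ℕ → L} (h0 : c 0 = ⊥) (hn : c n = y)
    (hc : ∀ i < n, c i ⋖ c (i + 1)) :
    (∀ i < n, w (c i) (c (i + 1)) ≠ 0) ∧ w y x ≠ 0 := by
  set c' : ℕ → L := fun i => if i ≤ n then c i else x with hc'
  have key : ∀ i < n + 1, w (c' i) (c' (i + 1)) ≠ 0 := by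
    refine hx (n + 1) c' (by simp [hc', h0]) (by simp [hc']) ?_
    intro i hi
    rcases Nat.lt_or_ge i n with h | h
    · simpa [hc', h.le, Nat.succ_le_of_lt h] using hc i h
    · have : i = n := by omega
      subst this
      simpa [hc', hn] using hyx
  constructor
  · intro i hi
    have := key i (by omega)
    simpa [hc', hi.le, Nat.succ_le_of_lt hi] using this
  · have := key n (by omega)
    simpa [hc', hn] using this

lemma sim0_of_covby_rev {x y : L} (hx : Sim0 w x) (hyx : y ⋖ x) : Sim0 w y :=
  fun n c h0 hn hc => (sim0_extend hx hyx h0 hn hc).1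

end Aux

section Path
variable {L : Type*} [Lattice L] [LocallyFiniteOrder L]

lemma exists_cov_path : ∀ (k : ℕ) (a b : L), a ≤ b → (Finset.Icc a b).card ≤ k →
    ∃ (n : ℕ) (c : ℕ → L), c 0 = a ∧ c n = b ∧ ∀ i < n, c i ⋖ c (i + 1) := by
  intro k
  induction k with
  | zero =>
    intro a b hab hcard
    exact absurd (Finset.card_pos.mpr ⟨a, Finset.mem_Icc.mpr ⟨le_refl a, hab⟩⟩) (by omega)
  | succ k ih =>
    intro a b hab hcard
    rcases eq_or_lt_of_le hab with rfl | hlt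
    · exact ⟨0, fun _ => a, rfl, rfl, fun i hi => absurd hi (by omega)⟩
    · have hne : (Finset.Ioc a b).Nonempty := ⟨b, Finset.mem_Ioc.mpr ⟨hlt, le_refl b⟩⟩
      obtain ⟨y, hmin⟩ := Finset.exists_minimal hne
      have hy : y ∈ Finset.Ioc a b := hmin.1
      have hymin : ∀ t ∈ Finset.Ioc a b, ¬ t < y := fun t ht => hmin.not_lt ht
      rw [Finset.mem_Ioc] at hy
      have hay : a ⋖ y := by
        refine ⟨hy.1, fun t hat hty => ?_⟩
        exact hymin t (Finset.mem_Ioc.mpr ⟨hat, hty.le.trans hy.2⟩) hty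
      have hss : Finset.Icc y b ⊂ Finset.Icc a b := by
        refine ⟨Finset.Icc_subset_Icc_left hy.1.le, fun hsub => ?_⟩
        have := Finset.mem_Icc.mp (hsub (Finset.mem_Icc.mpr ⟨le_refl a, hab⟩))
        exact absurd this.1 (not_le_of_gt hy.1)
      obtain ⟨n, c, hc0, hcn, hcc⟩ := ih y b hy.2 (by
        have := Finset.card_lt_card hss; omega)
      refine ⟨n + 1, fun i => if i = 0 then a else c (i - 1), by simp, by simp [hcn], ?_⟩
      intro i hi
      rcases Nat.eq_zero_or_pos i with rfl | hpos
      · simpa [hc0] using hay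
      · have h1 : i ≠ 0 := by omega
        have h2 : i + 1 ≠ 0 := by omega
        simp only [h1, h2, if_false]
        have : i - 1 + 1 = i := by omega
        rw [show i + 1 - 1 = i - 1 + 1 by omega, ← this] at *
        exact hcc (i - 1) (by omega)

lemma exists_cov_path' {a b : L} (hab : a ≤ b) :
    ∃ (n : ℕ) (c : ℕ → L), c 0 = a ∧ c n = b ∧ ∀ i < n, c i ⋖ c (i + 1) :=
  exists_cov_path (Finset.Icc a b).card a b hab le_rfl

variable [OrderBot L] {w : L → L → ℤ}

lemma sim0_w_ne_zero {x y : L} (hx : Sim0 w x) (hyx : y ⋖ x) : w y x ≠ 0 := by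
  obtain ⟨n, c, h0, hn, hc⟩ := exists_cov_path' (bot_le : (⊥ : L) ≤ y)
  exact (sim0_extend hx hyx h0 hn hc).2

end Path

section Main
variable {L : Type*} [Lattice L] [LocallyFiniteOrder L] [IsModularLattice L] [OrderBot L]
  {w : L → L → ℤ}

lemma sim0_step (hproj : ProjConst w) :
    ∀ (n : ℕ) (x z : L) (c : ℕ → L), Sim0 w x → x ⋖ z → w x z ≠ 0 →
      c 0 = ⊥ → c n = z → (∀ i < n, c i ⋖ c (i + 1)) →
      ∀ i < n, w (c i) (c (i + 1)) ≠ 0 := by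
  intro n
  induction n with
  | zero => intro x z c _ _ _ _ _ _ i hi; omega
  | succ n ih =>
    intro x z c hx hxz hwxz h0 hn hc i hi
    have hyz : c n ⋖ z := by have := hc n (by omega); rwa [hn] at this
    by_cases hxy : x = c n
    · rcases Nat.lt_succ_iff_lt_or_eq.mp hi with h | h
      · exact hx n c h0 hxy.symm (fun j hj => hc j (by omega)) i h
      · subst h
        have : c (i + 1) = z := hn
        rw [this, ← hxy]
        exact hwxz
    · set y := c n with hy
      have hxlt : x < x ⊔ y := by
        rcases lt_or_eq_of_le (le_sup_left : x ≤ x ⊔ y) with h | h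
        · exact h
        · exfalso
          have hyx : y ≤ x := sup_eq_left.mp h.symm
          rcases lt_or_eq_of_le hyx with h' | h'
          · exact hyz.2 h' hxz.1
          · exact hxy h'.symm
      have hsup : x ⊔ y = z := by
        have hle : x ⊔ y ≤ z := sup_le hxz.1.le hyz.1.le
        rcases lt_or_eq_of_le hle with h | h
        · exact absurd h (fun h => hxz.2 hxlt h)
        · exact h
      have hxs : x ⋖ x ⊔ y := hsup ▸ hxz
      have hys : y ⋖ x ⊔ y := hsup ▸ hyz
      have hmy : x ⊓ y ⋖ y := inf_covBy_of_covBy_sup_left hxs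
      have hmx : x ⊓ y ⋖ x := inf_covBy_of_covBy_sup_right hys
      obtain ⟨e1, e2⟩ := hproj x y hxy hmx hmy hxs hys
      have hm : Sim0 w (x ⊓ y) := sim0_of_covby_rev hx hmx
      have hwmy : w (x ⊓ y) y ≠ 0 := by rw [e2, hsup]; exact hwxz
      rcases Nat.lt_succ_iff_lt_or_eq.mp hi with h | h
      · exact ih (x ⊓ y) y c hm hmy hwmy h0 rfl (fun j hj => hc j (by omega)) i h
      · subst h
        have hcz : c (i + 1) = z := hn
        rw [hcz, ← hy, ← hsup, ← e1]
        exact sim0_w_ne_zero hx hmx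

lemma sim0_of_upper (hproj : ProjConst w) {x z : L} (hx : Sim0 w x) (hxz : x ⋖ z)
    (hw : w x z ≠ 0) : Sim0 w z :=
  fun n c h0 hn hc => sim0_step hproj n x z c hx hxz hw h0 hn hc

lemma simW_iff_sim0 {x : L} : SimW w x ⊥ ↔ Sim0 w x := by
  simp [SimW, Sim0]

end Main

/-- The truncated differential equation holds on the `∼`-class of `⊥`. -/
theorem stmt7 {L : Type*} [Lattice L] [LocallyFiniteOrder L] [IsModularLattice L]
    [OrderBot L]
    (w : L → L → ℤ) (hproj : ProjConst w) (r : ℤ) (hdiff : DiffCond w r) :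
    ∀ x : L, SimW w x ⊥ →
      (∑ᶠ y ∈ {y | y ⋖ x ∧ SimW w y ⊥}, w y x) + r =
        ∑ᶠ z ∈ {z | x ⋖ z ∧ SimW w z ⊥}, w x z := by
  intro x hx
  have hx0 : Sim0 w x := simW_iff_sim0.mp hx
  obtain ⟨hf1, hf2, heq⟩ := hdiff x
  have hset1 : {y | y ⋖ x ∧ SimW w y ⊥} = {y | y ⋖ x} := by
    ext y
    exact ⟨fun h => h.1, fun h => ⟨h, simW_iff_sim0.mpr (sim0_of_covby_rev hx0 h)⟩⟩
  have hsub : {z | x ⋖ z ∧ SimW w z ⊥} ⊆ {z | x ⋖ z} := fun z hz => hz.1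
  have hf2' : {z | x ⋖ z ∧ SimW w z ⊥}.Finite := hf2.subset hsub
  have hupper : (∑ᶠ z ∈ {z | x ⋖ z ∧ SimW w z ⊥}, w x z) = ∑ᶠ z ∈ {z | x ⋖ z}, w x z := by
    rw [finsum_mem_eq_finite_toFinset_sum _ hf2', finsum_mem_eq_finite_toFinset_sum _ hf2]
    refine Finset.sum_subset ?_ ?_
    · intro z hz
      simp only [Set.Finite.mem_toFinset] at *
      exact hsub hz
    · intro z hz hz'
      simp only [Set.Finite.mem_toFinset, Set.mem_setOf_eq] at hz hz'
      by_contra hw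
      exact hz' ⟨hz, simW_iff_sim0.mpr (sim0_of_upper hproj hx0 hz hw)⟩
  rw [hset1, hupper]
  exact heq
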